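/- If a trim lattice is graded (every maximal chain in every interval has the same cardinality), then it contains no sublattice isomorphic to N_5. -/

import Mathlib

variable {α : Type*}

/-- An element is join-irreducible if it is not the minimum and is not a join
of two strictly smaller elements. -/
def JoinIrred [Lattice α] (a : α) : Prop :=
  ¬ IsBot a ∧ ∀ b c : α, b < a → c < a → b ⊔ c ≠ a

/-- An element is meet-irreducible if it is not the maximum and is not a meet
of two strictly larger elements. -/
def MeetIrred [Lattice α] (a : α) : Prop :=
  ¬ IsTop a ∧ ∀ b c : α, a < b → a < c → b ⊓ c ≠ a

/-- An element `x` is left modular if `(y ⊔ x) ⊓ z = y ⊔ (x ⊓ z)` for all `y < z`. -/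
def LeftModular [Lattice α] (x : α) : Prop :=
  ∀ y z : α, y < z → (y ⊔ x) ⊓ z = y ⊔ (x ⊓ z)

/-- A maximal chain `⊥ = x 0 ⋖ x 1 ⋖ ⋯ ⋖ x n = ⊤` all of whose elements are left modular. -/
def IsLMChain [Lattice α] {n : ℕ} (x : Fin (n + 1) → α) : Prop :=
  IsBot (x 0) ∧ IsTop (x (Fin.last n)) ∧ (∀ i : Fin n, x i.castSucc ⋖ x i.succ) ∧
    ∀ i, LeftModular (x i)

/-- A finite lattice is trim if it has a left modular maximal chain of `n + 1` elements,
exactly `n` join-irreducibles and exactly `n` meet-irreducibles. -/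
def Trim (α : Type*) [Lattice α] [Finite α] : Prop :=
  ∃ (n : ℕ) (x : Fin (n + 1) → α), IsLMChain x ∧
    Nat.card {v : α // JoinIrred v} = n ∧ Nat.card {v : α // MeetIrred v} = n

/-- All maximal (saturated) chains between any two fixed endpoints have the same length. -/
def Graded (α : Type*) [Lattice α] : Prop :=
  ∀ (m k : ℕ) (c : Fin (m + 1) → α) (d : Fin (k + 1) → α),
    (∀ i : Fin m, c i.castSucc ⋖ c i.succ) → (∀ i : Fin k, d i.castSucc ⋖ d i.succ) →
    c 0 = d 0 → c (Fin.last m) = d (Fin.last k) → m = k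

section N5Aux

variable [Lattice α] [Finite α]

/-- Below any `b ≰ a` there is a join-irreducible `j ≤ b` with `j ≰ a`. -/
private lemma exists_ji {a b : α} (h : ¬ b ≤ a) :
    ∃ j : α, JoinIrred j ∧ j ≤ b ∧ ¬ j ≤ a := by
  obtain ⟨j, ⟨hjb, hja⟩, hmin⟩ :=
    Set.Finite.exists_minimalFor id {y : α | y ≤ b ∧ ¬ y ≤ a} (Set.toFinite _)
      ⟨b, le_rfl, h⟩
  refine ⟨j, ⟨fun hb' => hja (hb' a), ?_⟩, hjb, hja⟩
  intro c d hc hd hcd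
  by_cases hca : c ≤ a
  · by_cases hda : d ≤ a
    · exact hja (hcd ▸ sup_le hca hda)
    · exact hd.not_ge (hmin ⟨hd.le.trans hjb, hda⟩ hd.le)
  · exact hc.not_ge (hmin ⟨hc.le.trans hjb, hca⟩ hc.le)

/-- Above any `a` with `b ≰ a` there is a meet-irreducible `m ≥ a` with `b ≰ m`. -/
private lemma exists_mi {a b : α} (h : ¬ b ≤ a) :
    ∃ m : α, MeetIrred m ∧ a ≤ m ∧ ¬ b ≤ m := by
  obtain ⟨m, ⟨ham, hbm⟩, hmax⟩ :=
    Set.Finite.exists_maximalFor id {y : α | a ≤ y ∧ ¬ b ≤ y} (Set.toFinite _)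
      ⟨a, le_rfl, h⟩
  refine ⟨m, ⟨fun ht' => hbm (ht' b), ?_⟩, ham, hbm⟩
  intro c d hc hd hcd
  by_cases hbc : b ≤ c
  · by_cases hbd : b ≤ d
    · exact hbm (hcd ▸ le_inf hbc hbd)
    · exact hd.not_ge (hmax ⟨ham.trans hd.le, hbd⟩ hd.le)
  · exact hc.not_ge (hmax ⟨ham.trans hc.le, hbc⟩ hc.le)

/-- In a finite lattice there is a saturated chain between any two comparable elements. -/
private lemma exists_chain : ∀ b a : α, a ≤ b →
    ∃ p : RelSeries {q : α × α | q.1 ⋖ q.2}, p.head = a ∧ p.last = b := by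
  intro b
  induction b using WellFoundedLT.induction with
  | _ b ih =>
    intro a hab
    rcases eq_or_lt_of_le hab with rfl | hlt
    · exact ⟨RelSeries.singleton _ a, rfl, rfl⟩
    · obtain ⟨y, ⟨hay, hyb⟩, hmax⟩ :=
        Set.Finite.exists_maximalFor id {c : α | a ≤ c ∧ c < b} (Set.toFinite _)
          ⟨a, le_rfl, hlt⟩
      have hcov : y ⋖ b :=
        ⟨hyb, fun c hyc hcb => hyc.not_ge (hmax ⟨hay.trans hyc.le, hcb⟩ hyc.le)⟩
      obtain ⟨p, hph, hpl⟩ := ih y hyb a hay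
      exact ⟨p.snoc b (by rw [hpl]; exact hcov), by simp [hph], by simp⟩

omit [Finite α] in
private lemma chain_mono (p : RelSeries {q : α × α | q.1 ⋖ q.2}) : Monotone p.toFun :=
  (Fin.strictMono_iff_lt_succ.2 fun i => (show p.toFun i.castSucc ⋖ p.toFun i.succ from p.step i).lt).monotone

end N5Aux

/-- A graded trim lattice contains no sublattice isomorphic to the pentagon `N₅`. -/
theorem no_N5 [Lattice α] [Finite α] (htrim : Trim α) (hgr : Graded α) :
    ¬ ∃ w t u v z : α, w < u ∧ u < v ∧ v < t ∧ w < z ∧ z < t ∧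
      u ⊔ z = t ∧ v ⊔ z = t ∧ u ⊓ z = w ∧ v ⊓ z = w := by
  classical
  haveI : Fintype α := Fintype.ofFinite α
  obtain ⟨n, x, ⟨hxb, hxt, hxcov, -⟩, hJcard, hMcard⟩ := htrim
  rintro ⟨w, t, u, v, z, hwu, huv, hvt, hwz, hzt, huz, hvz, huzm, hvzm⟩
  set b : α := x 0 with hb
  set tp : α := x (Fin.last n) with htp
  -- finsets of (join/meet)-irreducibles
  set Js : α → Finset α := fun a => Finset.univ.filter fun j => JoinIrred j ∧ j ≤ a with hJs
  set Ms : α → Finset α := fun a => Finset.univ.filter fun m => MeetIrred m ∧ a ≤ m with hMs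
  set Jall : Finset α := Finset.univ.filter JoinIrred with hJall
  set Mall : Finset α := Finset.univ.filter MeetIrred with hMall
  have hJallcard : Jall.card = n := by
    rw [← hJcard, Nat.card_eq_fintype_card, Fintype.card_subtype]
  have hMallcard : Mall.card = n := by
    rw [← hMcard, Nat.card_eq_fintype_card, Fintype.card_subtype]
  -- chains from bottom / to top
  choose P hPh hPl using fun a : α => exists_chain a b (hxb a)
  choose Q hQh hQl using fun a : α => exists_chain tp a (hxt a)
  set ρ : α → ℕ := fun a => (P a).length with hρ
  -- gradedness: the two pieces glue to a chain of length n
  have hsum : ∀ a : α, ρ a + (Q a).length = n := by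
    intro a
    have hconn : (P a).last = (Q a).head := by rw [hPl, hQh]
    refine hgr _ n ((P a).smash (Q a) hconn).toFun x
      (fun i => ((P a).smash (Q a) hconn).step i) hxcov ?_ ?_
    · show ((P a).smash (Q a) hconn).head = x 0
      rw [RelSeries.head_smash, hPh]
    · show ((P a).smash (Q a) hconn).last = x (Fin.last n)
      rw [RelSeries.last_smash, hQl]
  -- a chain ending at `a` injects into the join-irreducibles below `a`
  have hJlow : ∀ p : RelSeries {q : α × α | q.1 ⋖ q.2}, p.length ≤ (Js p.last).card := by
    intro p
    choose j hji hjle hjnle using fun i : Fin p.length => exists_ji (show p.toFun i.castSucc ⋖ p.toFun i.succ from p.step i).lt.not_ge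
    have key : ∀ i k : Fin p.length, i < k → j i ≠ j k := by
      intro i k hlt heq
      apply hjnle k
      rw [← heq]
      refine (hjle i).trans (chain_mono p ?_)
      simp only [Fin.le_def, Fin.val_succ, Fin.coe_castSucc]
      exact hlt
    have hmem : ∀ i : Fin p.length, j i ∈ Js p.last := by
      intro i
      simp only [hJs, Finset.mem_filter, Finset.mem_univ, true_and]
      exact ⟨hji i, (hjle i).trans (chain_mono p (Fin.le_last _))⟩
    calc p.length = (Finset.univ : Finset (Fin p.length)).card := by simp
      _ ≤ (Js p.last).card := by
          refine Finset.card_le_card_of_injOn j (fun i _ => hmem i) ?_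
          intro i _ k _ heq
          rcases lt_trichotomy i k with h | h | h
          · exact absurd heq (key i k h)
          · exact h
          · exact absurd heq.symm (key k i h)
  -- a chain starting at `a` injects into the join-irreducibles not below `a`
  have hJhigh : ∀ p : RelSeries {q : α × α | q.1 ⋖ q.2},
      p.length ≤ (Jall \ Js p.head).card := by
    intro p
    choose j hji hjle hjnle using fun i : Fin p.length => exists_ji (show p.toFun i.castSucc ⋖ p.toFun i.succ from p.step i).lt.not_ge
    have key : ∀ i k : Fin p.length, i < k → j i ≠ j k := by
      intro i k hlt heq
      apply hjnle k
      rw [← heq]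
      refine (hjle i).trans (chain_mono p ?_)
      simp only [Fin.le_def, Fin.val_succ, Fin.coe_castSucc]
      exact hlt
    have hmem : ∀ i : Fin p.length, j i ∈ Jall \ Js p.head := by
      intro i
      simp only [hJs, hJall, Finset.mem_sdiff, Finset.mem_filter, Finset.mem_univ, true_and,
        not_and]
      refine ⟨hji i, fun _ hle => hjnle i ?_⟩
      exact hle.trans (chain_mono p (Fin.zero_le _))
    calc p.length = (Finset.univ : Finset (Fin p.length)).card := by simp
      _ ≤ (Jall \ Js p.head).card := by
          refine Finset.card_le_card_of_injOn j (fun i _ => hmem i) ?_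
          intro i _ k _ heq
          rcases lt_trichotomy i k with h | h | h
          · exact absurd heq (key i k h)
          · exact h
          · exact absurd heq.symm (key k i h)
  -- dual statements for meet-irreducibles
  have hMhigh : ∀ p : RelSeries {q : α × α | q.1 ⋖ q.2}, p.length ≤ (Ms p.head).card := by
    intro p
    choose m hmi hmge hmnle using fun i : Fin p.length => exists_mi (show p.toFun i.castSucc ⋖ p.toFun i.succ from p.step i).lt.not_ge
    have key : ∀ i k : Fin p.length, i < k → m i ≠ m k := by
      intro i k hlt heq
      apply hmnle i
      rw [heq]
      refine le_trans (chain_mono p ?_) (hmge k)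
      simp only [Fin.le_def, Fin.val_succ, Fin.coe_castSucc]
      exact hlt
    have hmem : ∀ i : Fin p.length, m i ∈ Ms p.head := by
      intro i
      simp only [hMs, Finset.mem_filter, Finset.mem_univ, true_and]
      exact ⟨hmi i, le_trans (chain_mono p (Fin.zero_le _)) (hmge i)⟩
    calc p.length = (Finset.univ : Finset (Fin p.length)).card := by simp
      _ ≤ (Ms p.head).card := by
          refine Finset.card_le_card_of_injOn m (fun i _ => hmem i) ?_
          intro i _ k _ heq
          rcases lt_trichotomy i k with h | h | h
          · exact absurd heq (key i k h)
          · exact h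
          · exact absurd heq.symm (key k i h)
  have hMlow : ∀ p : RelSeries {q : α × α | q.1 ⋖ q.2},
      p.length ≤ (Mall \ Ms p.last).card := by
    intro p
    choose m hmi hmge hmnle using fun i : Fin p.length => exists_mi (show p.toFun i.castSucc ⋖ p.toFun i.succ from p.step i).lt.not_ge
    have key : ∀ i k : Fin p.length, i < k → m i ≠ m k := by
      intro i k hlt heq
      apply hmnle i
      rw [heq]
      refine le_trans (chain_mono p ?_) (hmge k)
      simp only [Fin.le_def, Fin.val_succ, Fin.coe_castSucc]
      exact hlt
    have hmem : ∀ i : Fin p.length, m i ∈ Mall \ Ms p.last := by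
      intro i
      simp only [hMs, hMall, Finset.mem_sdiff, Finset.mem_filter, Finset.mem_univ, true_and,
        not_and]
      refine ⟨hmi i, fun _ hle => hmnle i ?_⟩
      exact le_trans (chain_mono p (Fin.le_last _)) hle
    calc p.length = (Finset.univ : Finset (Fin p.length)).card := by simp
      _ ≤ (Mall \ Ms p.last).card := by
          refine Finset.card_le_card_of_injOn m (fun i _ => hmem i) ?_
          intro i _ k _ heq
          rcases lt_trichotomy i k with h | h | h
          · exact absurd heq (key i k h)
          · exact h
          · exact absurd heq.symm (key k i h)
  -- exact counts
  have hJsubAll : ∀ a : α, Js a ⊆ Jall := by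
    intro a j hj
    simp only [hJs, hJall, Finset.mem_filter, Finset.mem_univ, true_and] at hj ⊢
    exact hj.1
  have hMsubAll : ∀ a : α, Ms a ⊆ Mall := by
    intro a m hm
    simp only [hMs, hMall, Finset.mem_filter, Finset.mem_univ, true_and] at hm ⊢
    exact hm.1
  have hJcardEq : ∀ a : α, (Js a).card = ρ a := by
    intro a
    have h1 := hJlow (P a)
    rw [hPl] at h1
    have h2 := hJhigh (Q a)
    rw [hQh] at h2
    have h3 : (Jall \ Js a).card + (Js a).card = n := by
      rw [Finset.card_sdiff_add_card_eq_card (hJsubAll a), hJallcard]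
    have h4 := hsum a
    have h5 : ρ a = (P a).length := rfl
    omega
  have hMcardEq : ∀ a : α, (Ms a).card + ρ a = n := by
    intro a
    have h1 := hMhigh (Q a)
    rw [hQh] at h1
    have h2 := hMlow (P a)
    rw [hPl] at h2
    have h3 : (Mall \ Ms a).card + (Ms a).card = n := by
      rw [Finset.card_sdiff_add_card_eq_card (hMsubAll a), hMallcard]
    have h4 := hsum a
    have h5 : ρ a = (P a).length := rfl
    omega
  -- lattice structure of the irreducible sets
  have hJinf : ∀ a c : α, Js (a ⊓ c) = Js a ∩ Js c := by
    intro a c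
    ext j
    simp only [hJs, Finset.mem_inter, Finset.mem_filter, Finset.mem_univ, true_and, le_inf_iff]
    tauto
  have hMsup : ∀ a c : α, Ms (a ⊔ c) = Ms a ∩ Ms c := by
    intro a c
    ext m
    simp only [hMs, Finset.mem_inter, Finset.mem_filter, Finset.mem_univ, true_and, sup_le_iff]
    tauto
  have hJsup : ∀ a c : α, Js a ∪ Js c ⊆ Js (a ⊔ c) := by
    intro a c j hj
    simp only [hJs, Finset.mem_union, Finset.mem_filter, Finset.mem_univ, true_and] at hj ⊢
    rcases hj with ⟨h1, h2⟩ | ⟨h1, h2⟩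
    · exact ⟨h1, h2.trans le_sup_left⟩
    · exact ⟨h1, h2.trans le_sup_right⟩
  have hMinf : ∀ a c : α, Ms a ∪ Ms c ⊆ Ms (a ⊓ c) := by
    intro a c m hm
    simp only [hMs, Finset.mem_union, Finset.mem_filter, Finset.mem_univ, true_and] at hm ⊢
    rcases hm with ⟨h1, h2⟩ | ⟨h1, h2⟩
    · exact ⟨h1, inf_le_left.trans h2⟩
    · exact ⟨h1, inf_le_right.trans h2⟩
  -- the rank is modular
  have hmod : ∀ a c : α, ρ a + ρ c = ρ (a ⊔ c) + ρ (a ⊓ c) := by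
    intro a c
    have h1 : (Js a ∪ Js c).card + (Js a ∩ Js c).card = (Js a).card + (Js c).card :=
      Finset.card_union_add_card_inter _ _
    have h2 : (Js a ∪ Js c).card ≤ (Js (a ⊔ c)).card := Finset.card_le_card (hJsup a c)
    have h3 : (Ms a ∪ Ms c).card + (Ms a ∩ Ms c).card = (Ms a).card + (Ms c).card :=
      Finset.card_union_add_card_inter _ _
    have h4 : (Ms a ∪ Ms c).card ≤ (Ms (a ⊓ c)).card := Finset.card_le_card (hMinf a c)
    have g1 : (Js (a ⊓ c)).card = (Js a ∩ Js c).card := by rw [hJinf]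
    have g2 : (Ms (a ⊔ c)).card = (Ms a ∩ Ms c).card := by rw [hMsup]
    have e1 := hJcardEq a
    have e2 := hJcardEq c
    have e3 := hJcardEq (a ⊔ c)
    have e4 := hJcardEq (a ⊓ c)
    have f1 := hMcardEq a
    have f2 := hMcardEq c
    have f3 := hMcardEq (a ⊔ c)
    have f4 := hMcardEq (a ⊓ c)
    omega
  -- the rank is strictly monotone
  have hstrict : ∀ a c : α, a < c → ρ a < ρ c := by
    intro a c h
    have hss : Js a ⊂ Js c := by
      rw [Finset.ssubset_iff_of_subset]
      · obtain ⟨j, hji, hjc, hja⟩ := exists_ji h.not_ge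
        refine ⟨j, ?_, ?_⟩
        · simp only [hJs, Finset.mem_filter, Finset.mem_univ, true_and]
          exact ⟨hji, hjc⟩
        · simp only [hJs, Finset.mem_filter, Finset.mem_univ, true_and, not_and]
          exact fun _ => hja
      · intro j hj
        simp only [hJs, Finset.mem_filter, Finset.mem_univ, true_and] at hj ⊢
        exact ⟨hj.1, hj.2.trans h.le⟩
    have := Finset.card_lt_card hss
    rwa [hJcardEq, hJcardEq] at this
  -- conclude
  have h1 := hmod u z
  have h2 := hmod v z
  rw [huz, huzm] at h1
  rw [hvz, hvzm] at h2
  have h3 := hstrict u v huv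
  omega
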